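/- arXiv:1503.06173 — 2 statements merged into one kernel-verified Lean document; each statement's English description precedes it below -/
import Mathlib

section
/- For nonnegative integers n and m with m \ge 1, J_n^m = \sum_{s=0}^{n} \binom{n}{s} J_s^0 \, J_{n-s}^{m-1}, where J_n^m = \sum_{s=0}^{n} S(n,s)\, s! \binom{m+s}{m}. -/
open Finset

/-- Stirling numbers of the second kind. -/
def stirling2 : ℕ → ℕ → ℕ
  | 0, 0 => 1
  | 0, _ + 1 => 0
  | _ + 1, 0 => 0
  | n + 1, k + 1 => (k + 1) * stirling2 n (k + 1) + stirling2 n k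

/-- Fubini numbers: number of preferential arrangements of an n-set. -/
def fubini (n : ℕ) : ℕ := ∑ s ∈ range (n + 1), stirling2 n s * s.factorial

/-- Number of barred preferential arrangements of an n-set with m bars. -/
def barred (n m : ℕ) : ℕ :=
  ∑ s ∈ range (n + 1), stirling2 n s * s.factorial * (m + s).choose m

/-- Number of restricted barred preferential arrangements. -/
def restrictedBarred (n m : ℕ) : ℕ :=
  ∑ s ∈ range (n + 1), n.choose s * m ^ s * fubini (n - s)

/-- Ordered set partitions: `F n s` counts ordered partitions of an `n`-set into `s` blocks. -/
def F (n s : ℕ) : ℕ := stirling2 n s * s.factorial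

lemma stirling2_eq_zero : ∀ n k, n < k → stirling2 n k = 0 := by
  intro n
  induction n with
  | zero => intro k hk; match k, hk with | k + 1, _ => rfl
  | succ n ih =>
    intro k hk
    match k, hk with
    | k + 1, hk =>
      have h1 : stirling2 n (k + 1) = 0 := ih _ (by omega)
      have h2 : stirling2 n k = 0 := ih _ (by omega)
      show (k + 1) * stirling2 n (k + 1) + stirling2 n k = 0
      rw [h1, h2]; ring

lemma F_eq_zero {n k : ℕ} (h : n < k) : F n k = 0 := by
  simp [F, stirling2_eq_zero n k h]

lemma F_zero (s : ℕ) : F 0 s = if s = 0 then 1 else 0 := by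
  cases s with
  | zero => rfl
  | succ s => simp [F, show stirling2 0 (s+1) = 0 from rfl]

lemma F_succ (n s : ℕ) : F (n + 1) s = s * (F n s + F n (s - 1)) := by
  cases s with
  | zero => simp [F, show stirling2 (n+1) 0 = 0 from rfl]
  | succ s =>
    show stirling2 (n+1) (s+1) * (s+1).factorial = _
    rw [show stirling2 (n+1) (s+1) = (s + 1) * stirling2 n (s + 1) + stirling2 n s from rfl]
    simp only [F, Nat.succ_sub_one, Nat.factorial_succ]
    ring

lemma conv : ∀ n a b, (∑ k ∈ range (n + 1), n.choose k * F k a * F (n - k) b) = F n (a + b) := by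
  intro n
  induction n with
  | zero =>
    intro a b
    cases a <;> cases b <;> simp [F_zero]
  | succ n ih =>
    intro a b
    have key : (∑ k ∈ range (n + 2), (n+1).choose k * F k a * F (n + 1 - k) b)
        = (∑ k ∈ range (n + 1), n.choose k * F k a * F (n + 1 - k) b)
          + ∑ k ∈ range (n + 1), n.choose k * F (k + 1) a * F (n - k) b := by
      rw [Finset.sum_range_succ' (fun k => (n+1).choose k * F k a * F (n + 1 - k) b)]
      have : ∀ j, (n+1).choose (j+1) * F (j+1) a * F (n + 1 - (j+1)) b
          = n.choose (j+1) * F (j+1) a * F (n + 1 - (j+1)) b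
            + n.choose j * F (j+1) a * F (n - j) b := by
        intro j
        rw [Nat.choose_succ_succ]
        have : n + 1 - (j + 1) = n - j := by omega
        rw [this]; ring
      rw [Finset.sum_congr rfl (fun j _ => this j), Finset.sum_add_distrib]
      have h0 : (n+1).choose 0 * F 0 a * F (n + 1 - 0) b
          = n.choose 0 * F 0 a * F (n + 1 - 0) b := by simp
      rw [h0]
      have : (∑ j ∈ range (n + 1), n.choose (j+1) * F (j+1) a * F (n + 1 - (j+1)) b)
            + n.choose 0 * F 0 a * F (n + 1 - 0) b
          = ∑ k ∈ range (n + 2), n.choose k * F k a * F (n + 1 - k) b := by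
        rw [Finset.sum_range_succ' (fun k => n.choose k * F k a * F (n + 1 - k) b)]
      rw [add_right_comm, this, Finset.sum_range_succ, Nat.choose_succ_self, zero_mul, zero_mul,
        add_zero]
    rw [key]
    have e1 : (∑ k ∈ range (n + 1), n.choose k * F k a * F (n + 1 - k) b)
        = b * ((∑ k ∈ range (n + 1), n.choose k * F k a * F (n - k) b)
            + ∑ k ∈ range (n + 1), n.choose k * F k a * F (n - k) (b - 1)) := by
      have pt : (∑ k ∈ range (n + 1), n.choose k * F k a * F (n + 1 - k) b)
          = ∑ k ∈ range (n + 1), (b * (n.choose k * F k a * F (n - k) b)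
              + b * (n.choose k * F k a * F (n - k) (b - 1))) := by
        refine Finset.sum_congr rfl fun k hk => ?_
        have hk' : k ≤ n := by simpa [Nat.lt_succ_iff] using hk
        have : n + 1 - k = (n - k) + 1 := by omega
        rw [this, F_succ]; ring
      rw [pt, Finset.sum_add_distrib, ← Finset.mul_sum, ← Finset.mul_sum, mul_add]
    have e2 : (∑ k ∈ range (n + 1), n.choose k * F (k + 1) a * F (n - k) b)
        = a * ((∑ k ∈ range (n + 1), n.choose k * F k a * F (n - k) b)
            + ∑ k ∈ range (n + 1), n.choose k * F k (a - 1) * F (n - k) b) := by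
      have pt : (∑ k ∈ range (n + 1), n.choose k * F (k + 1) a * F (n - k) b)
          = ∑ k ∈ range (n + 1), (a * (n.choose k * F k a * F (n - k) b)
              + a * (n.choose k * F k (a - 1) * F (n - k) b)) := by
        refine Finset.sum_congr rfl fun k _ => ?_
        rw [F_succ]; ring
      rw [pt, Finset.sum_add_distrib, ← Finset.mul_sum, ← Finset.mul_sum, mul_add]
    rw [e1, e2, ih a b, F_succ]
    cases a with
    | zero =>
      cases b with
      | zero => simp
      | succ b =>
        have h : (0:ℕ) + (b + 1) - 1 = b := by omega
        have h2 : b + 1 - 1 = b := by omega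
        rw [h, h2, ih 0 b]
        simp only [Nat.zero_add, zero_mul, add_zero]
    | succ a =>
      cases b with
      | zero =>
        have h : a + 1 + 0 - 1 = a := by omega
        rw [h, ih a 0]
        simp only [Nat.add_zero, zero_mul, add_zero, zero_add]
      | succ b =>
        have h2 : b + 1 - 1 = b := by omega
        have h3 : a + 1 - 1 = a := by omega
        rw [h2, h3, ih (a+1) b, ih a (b+1)]
        have h1 : a + 1 + b = a + 1 + (b + 1) - 1 := by omega
        have h4 : a + (b + 1) = a + 1 + (b + 1) - 1 := by omega
        rw [h1, h4]; ring

lemma hockey (r : ℕ) : ∀ t, (∑ b ∈ range (t + 1), (r + b).choose r) = (r + 1 + t).choose (r + 1) := by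
  intro t
  induction t with
  | zero => simp
  | succ t ih =>
    rw [Finset.sum_range_succ, ih]
    have h : r + 1 + (t + 1) = (r + 1 + t) + 1 := by omega
    rw [h, Nat.choose_succ_succ]
    have h2 : r + (t + 1) = r + 1 + t := by omega
    rw [h2, Nat.add_comm]

theorem barred_recurrence (n m : ℕ) (hm : 1 ≤ m) :
    barred n m = ∑ s ∈ range (n + 1), n.choose s * barred s 0 * barred (n - s) (m - 1) := by
  obtain ⟨m', rfl⟩ : ∃ m', m = m' + 1 := ⟨m - 1, by omega⟩
  simp only [Nat.add_sub_cancel]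
  have hb0 : ∀ s ∈ range (n + 1), barred s 0 = ∑ a ∈ range (n + 1), F s a := by
    intro s hs
    have hs' : s ≤ n := by simpa [Nat.lt_succ_iff] using hs
    rw [barred]
    rw [show (∑ a ∈ range (s + 1), stirling2 s a * a.factorial * (0 + a).choose 0)
        = ∑ a ∈ range (s + 1), F s a from Finset.sum_congr rfl fun a _ => by simp [F]]
    exact Finset.sum_subset (by intro x hx; simp at hx ⊢; omega)
      (fun x _ hx => F_eq_zero (by simp at hx ⊢; omega))
  have hb1 : ∀ s ∈ range (n + 1), barred (n - s) m'
      = ∑ b ∈ range (n + 1), F (n - s) b * (m' + b).choose m' := by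
    intro s hs
    rw [barred]
    rw [show (∑ b ∈ range (n - s + 1), stirling2 (n-s) b * b.factorial * (m' + b).choose m')
        = ∑ b ∈ range (n - s + 1), F (n - s) b * (m' + b).choose m' from
          Finset.sum_congr rfl fun b _ => by simp [F]]
    exact Finset.sum_subset (by intro x hx; simp at hx ⊢; omega)
      (fun x _ hx => by
        rw [F_eq_zero (by simp at hx ⊢; omega), zero_mul])
  rw [Finset.sum_congr rfl fun s hs => by rw [hb0 s hs, hb1 s hs]]
  have step1 : ∀ s, n.choose s * (∑ a ∈ range (n + 1), F s a)
        * (∑ b ∈ range (n + 1), F (n - s) b * (m' + b).choose m')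
      = ∑ a ∈ range (n + 1), ∑ b ∈ range (n + 1),
          n.choose s * F s a * F (n - s) b * (m' + b).choose m' := by
    intro s
    rw [Finset.mul_sum (range (n + 1)) (fun a => F s a) (n.choose s), Finset.sum_mul_sum]
    exact Finset.sum_congr rfl fun a _ => Finset.sum_congr rfl fun b _ => by ring
  rw [Finset.sum_congr rfl fun s _ => step1 s]
  have expand : (∑ s ∈ range (n + 1), ∑ a ∈ range (n + 1), ∑ b ∈ range (n + 1),
        n.choose s * F s a * F (n - s) b * (m' + b).choose m')
      = ∑ b ∈ range (n + 1), (∑ a ∈ range (n + 1), F n (a + b)) * (m' + b).choose m' := by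
    calc (∑ s ∈ range (n + 1), ∑ a ∈ range (n + 1), ∑ b ∈ range (n + 1),
          n.choose s * F s a * F (n - s) b * (m' + b).choose m')
        = ∑ a ∈ range (n + 1), ∑ s ∈ range (n + 1), ∑ b ∈ range (n + 1),
            n.choose s * F s a * F (n - s) b * (m' + b).choose m' := Finset.sum_comm
      _ = ∑ a ∈ range (n + 1), ∑ b ∈ range (n + 1), ∑ s ∈ range (n + 1),
            n.choose s * F s a * F (n - s) b * (m' + b).choose m' :=
          Finset.sum_congr rfl fun a _ => Finset.sum_comm
      _ = ∑ b ∈ range (n + 1), ∑ a ∈ range (n + 1), ∑ s ∈ range (n + 1),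
            n.choose s * F s a * F (n - s) b * (m' + b).choose m' := Finset.sum_comm
      _ = ∑ b ∈ range (n + 1), (∑ a ∈ range (n + 1), F n (a + b)) * (m' + b).choose m' := by
          refine Finset.sum_congr rfl fun b _ => ?_
          rw [Finset.sum_mul]
          refine Finset.sum_congr rfl fun a _ => ?_
          rw [← Finset.sum_mul, conv]
  rw [expand]
  have inner : ∀ b ∈ range (n + 1),
      (∑ a ∈ range (n + 1), F n (a + b)) = ∑ t ∈ Ico b (n + 1), F n t := by
    intro b hb
    have hb' : b ≤ n := by simpa [Nat.lt_succ_iff] using hb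
    rw [Finset.sum_Ico_eq_sum_range]
    have : (∑ a ∈ range (n + 1 - b), F n (b + a)) = ∑ a ∈ range (n + 1 - b), F n (a + b) :=
      Finset.sum_congr rfl fun a _ => by rw [Nat.add_comm]
    rw [this]
    exact (Finset.sum_subset (by intro x hx; simp at hx ⊢; omega)
      (fun x _ hx => F_eq_zero (by simp at hx ⊢; omega))).symm
  rw [Finset.sum_congr rfl fun b hb => by rw [inner b hb]]
  have swap : (∑ b ∈ range (n + 1), (∑ t ∈ Ico b (n + 1), F n t) * (m' + b).choose m')
      = ∑ t ∈ range (n + 1), F n t * ∑ b ∈ range (t + 1), (m' + b).choose m' := by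
    rw [Finset.range_eq_Ico]
    have hcomm := Finset.sum_Ico_Ico_comm 0 (n + 1) (fun b t => F n t * (m' + b).choose m')
    rw [Finset.sum_congr rfl fun b _ => by rw [Finset.sum_mul], hcomm]
    refine Finset.sum_congr rfl fun t _ => ?_
    rw [← Finset.mul_sum]
    rw [Finset.range_eq_Ico]
  rw [swap, barred]
  refine Finset.sum_congr rfl fun t _ => ?_
  rw [hockey m' t]
  simp [F]
end

section
/- For every nonnegative integer n, 2 I_n^2 - 2^n = I_n^3, where I_n^m = \sum_{s=0}^{n} \binom{n}{s} m^s J_{n-s}. -/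
open Finset

/-- Number of surjections from an n-set onto a k-set. -/
def sj (n k : ℕ) : ℕ := stirling2 n k * k.factorial

lemma stirling2_of_lt : ∀ {n k : ℕ}, n < k → stirling2 n k = 0 := by
  intro n
  induction n with
  | zero => intro k h; cases k with
    | zero => omega
    | succ k => rfl
  | succ n ih =>
    intro k h
    cases k with
    | zero => omega
    | succ k =>
      show (k + 1) * stirling2 n (k + 1) + stirling2 n k = 0
      rw [ih (by omega), ih (by omega)]
      simp

lemma sj_succ' (n k : ℕ) : sj (n + 1) k = k * (sj n k + sj n (k - 1)) := by
  cases k with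
  | zero => simp [sj, stirling2]
  | succ k =>
    show ((k + 1) * stirling2 n (k + 1) + stirling2 n k) * (k + 1).factorial = _
    simp only [sj, Nat.factorial_succ, Nat.add_sub_cancel]
    ring

lemma G (n : ℕ) : ∀ k, ∑ j ∈ range n, n.choose j * sj j k = sj n (k + 1) := by
  induction n with
  | zero => intro k; simp [sj, stirling2]
  | succ n ih =>
    intro k
    rw [Finset.sum_range_succ']
    have h1 : ∑ i ∈ range n, (n + 1).choose (i + 1) * sj (i + 1) k
        = ∑ i ∈ range n, (n.choose i * sj (i + 1) k + n.choose (i + 1) * sj (i + 1) k) := by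
      apply Finset.sum_congr rfl
      intro i _
      rw [Nat.choose_succ_succ', add_mul]
    rw [h1, Finset.sum_add_distrib]
    have h2 : ∑ i ∈ range n, n.choose (i + 1) * sj (i + 1) k + (n + 1).choose 0 * sj 0 k
        = sj n (k + 1) + sj n k := by
      rw [Nat.choose_zero_right, one_mul]
      have := Finset.sum_range_succ' (fun j => n.choose j * sj j k) n
      simp only [Nat.choose_zero_right, one_mul] at this
      rw [← this, Finset.sum_range_succ, ih k, Nat.choose_self, one_mul]
    have h3 : ∑ i ∈ range n, n.choose i * sj (i + 1) k
        = k * sj n (k + 1) + k * sj n ((k - 1) + 1) := by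
      have h4 : ∑ i ∈ range n, n.choose i * sj (i + 1) k
          = ∑ i ∈ range n, (k * (n.choose i * sj i k) + k * (n.choose i * sj i (k - 1))) := by
        apply Finset.sum_congr rfl
        intro i _
        rw [sj_succ']
        ring
      rw [h4, Finset.sum_add_distrib, ← Finset.mul_sum, ← Finset.mul_sum, ih k, ih (k - 1)]
    rw [add_assoc, h2, ← add_assoc, h3, sj_succ' n (k + 1), Nat.add_sub_cancel]
    cases k with
    | zero => ring
    | succ k => simp only [Nat.add_sub_cancel]; ring

lemma fubini_sj (n : ℕ) : fubini n = ∑ k ∈ range (n + 1), sj n k := rfl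

lemma fubini_rec (n : ℕ) :
    fubini (n + 1) = ∑ j ∈ range (n + 1), (n + 1).choose j * fubini j := by
  rw [fubini_sj, Finset.sum_range_succ']
  have h0 : sj (n + 1) 0 = 0 := by simp [sj, stirling2]
  rw [h0, add_zero]
  have h1 : ∑ k ∈ range (n + 1), sj (n + 1) (k + 1)
      = ∑ k ∈ range (n + 1), ∑ j ∈ range (n + 1), (n + 1).choose j * sj j k := by
    apply Finset.sum_congr rfl
    intro k _
    rw [G (n + 1) k]
  rw [h1, Finset.sum_comm]
  apply Finset.sum_congr rfl
  intro j hj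
  rw [← Finset.mul_sum]
  congr 1
  rw [fubini_sj]
  symm
  apply Finset.sum_subset
  · apply Finset.range_subset_range.2
    simp at hj; omega
  · intro k _ hk
    simp only [Finset.mem_range] at hk
    show stirling2 j k * k.factorial = 0
    rw [stirling2_of_lt (by omega), zero_mul]

lemma fubini_two (r : ℕ) :
    (∑ t ∈ range (r + 1), r.choose t * fubini t) + (if r = 0 then 1 else 0)
      = 2 * fubini r := by
  cases r with
  | zero => simp [fubini, stirling2]
  | succ r =>
    rw [if_neg (by omega), add_zero, Finset.sum_range_succ, Nat.choose_self, one_mul,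
      ← fubini_rec]
    ring

lemma binom_23 (m n : ℕ) (h : m ≤ n) :
    ∑ k ∈ range (n + 1), m.choose k * 2 ^ k = 3 ^ m := by
  have h3 : (3 : ℕ) ^ m = (2 + 1) ^ m := by norm_num
  rw [h3, add_pow]
  rw [← Finset.sum_subset (Finset.range_subset_range.2 (by omega : m + 1 ≤ n + 1))]
  · apply Finset.sum_congr rfl
    intro k hk
    simp only [Finset.mem_range] at hk
    push_cast
    ring
  · intro k _ hk
    simp only [Finset.mem_range] at hk
    rw [Nat.choose_eq_zero_of_lt (show m < k by omega)]
    ring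

lemma key_sum (n : ℕ) :
    ∑ k ∈ range (n + 1), n.choose k * 2 ^ k *
        (∑ t ∈ range (n - k + 1), (n - k).choose t * fubini t)
      = restrictedBarred n 3 := by
  have h1 : ∀ k ∈ range (n + 1),
      n.choose k * 2 ^ k * (∑ t ∈ range (n - k + 1), (n - k).choose t * fubini t)
      = ∑ t ∈ range (n + 1), n.choose k * 2 ^ k * ((n - k).choose t * fubini t) := by
    intro k hk
    rw [Finset.mul_sum]
    simp only [Finset.mem_range] at hk
    apply Finset.sum_subset (Finset.range_subset_range.2 (by omega))
    intro t _ ht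
    simp only [Finset.mem_range] at ht
    rw [Nat.choose_eq_zero_of_lt (show n - k < t by omega)]
    ring
  rw [Finset.sum_congr rfl h1, Finset.sum_comm]
  have h2 : restrictedBarred n 3
      = ∑ t ∈ range (n + 1), n.choose (n - t) * 3 ^ (n - t) * fubini (n - (n - t)) := by
    rw [restrictedBarred]
    rw [← Finset.sum_range_reflect]
    apply Finset.sum_congr rfl
    intro t ht
    simp only [Finset.mem_range] at ht
    have h5 : n + 1 - 1 - t = n - t := by omega
    rw [h5]
  rw [h2]
  apply Finset.sum_congr rfl
  intro t ht
  simp only [Finset.mem_range] at ht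
  have htn : t ≤ n := by omega
  have hnn : n - (n - t) = t := by omega
  rw [hnn]
  have h3 : ∀ k ∈ range (n + 1),
      n.choose k * 2 ^ k * ((n - k).choose t * fubini t)
      = n.choose (n - t) * ((n - t).choose k * 2 ^ k) * fubini t := by
    intro k hk
    simp only [Finset.mem_range] at hk
    by_cases hkt : k ≤ n - t
    · have hc : n.choose (n - t) * (n - t).choose k = n.choose k * (n - k).choose (n - t - k) :=
        Nat.choose_mul hkt
      have hsym : (n - k).choose (n - t - k) = (n - k).choose t := by
        have : n - t - k = (n - k) - t := by omega
        rw [this, Nat.choose_symm (by omega)]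
      rw [← hsym]
      calc n.choose k * 2 ^ k * ((n - k).choose (n - t - k) * fubini t)
          = n.choose k * (n - k).choose (n - t - k) * 2 ^ k * fubini t := by ring
        _ = n.choose (n - t) * (n - t).choose k * 2 ^ k * fubini t := by rw [← hc]
        _ = n.choose (n - t) * ((n - t).choose k * 2 ^ k) * fubini t := by ring
    · rw [Nat.choose_eq_zero_of_lt (show n - k < t by omega),
        Nat.choose_eq_zero_of_lt (show n - t < k by omega)]
      ring
  rw [Finset.sum_congr rfl h3, ← Finset.sum_mul, ← Finset.mul_sum,
    binom_23 (n - t) n (by omega)]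

theorem restricted_two_three (n : ℕ) :
    2 * restrictedBarred n 2 - 2 ^ n = restrictedBarred n 3 := by
  have key : 2 * restrictedBarred n 2 = restrictedBarred n 3 + 2 ^ n := by
    rw [restrictedBarred, Finset.mul_sum]
    have h1 : ∀ k ∈ range (n + 1),
        2 * (n.choose k * 2 ^ k * fubini (n - k))
        = n.choose k * 2 ^ k * ((∑ t ∈ range (n - k + 1), (n - k).choose t * fubini t)
            + (if n - k = 0 then 1 else 0)) := by
      intro k _
      rw [fubini_two]
      ring
    rw [Finset.sum_congr rfl h1]
    have h2 : ∀ k ∈ range (n + 1),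
        n.choose k * 2 ^ k * ((∑ t ∈ range (n - k + 1), (n - k).choose t * fubini t)
            + (if n - k = 0 then 1 else 0))
        = n.choose k * 2 ^ k * (∑ t ∈ range (n - k + 1), (n - k).choose t * fubini t)
          + n.choose k * 2 ^ k * (if n - k = 0 then 1 else 0) := by
      intro k _; ring
    rw [Finset.sum_congr rfl h2, Finset.sum_add_distrib, key_sum]
    congr 1
    rw [Finset.sum_eq_single n]
    · simp
    · intro k hk hkn
      simp only [Finset.mem_range] at hk
      rw [if_neg (by omega)]
      ring
    · intro h; simp at h
  omega
end
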